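/- Let (X, τ₁, τ₂) be a bitopological space with subsets Y, Z ⊆ X such that X = Y ∪ Z and the sets Y \ Z and Z \ Y are p-separated (i.e. cl₁(Y\Z) ∩ (Z\Y) = ∅ and (Y\Z) ∩ cl₂(Z\Y) = ∅). Then for every subset A ⊆ X, the D-closure of A with respect to (Y,Z) equals (closure of A ∩ Y in the subspace topology τ₁ restricted to Y) ∪ (closure of A ∩ Z in the subspace topology τ₂ restricted to Z). -/

import Mathlib

/-- The closure of `A` inside the subspace `Y` (with the topology induced from `t`),
viewed as a subset of the ambient space. -/
def subClosure {X : Type*} (t : TopologicalSpace X) (Y A : Set X) : Set X :=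
  Subtype.val '' (@closure _ (TopologicalSpace.induced (Subtype.val : Y → X) t)
    ((Subtype.val : Y → X) ⁻¹' A))

lemma subClosure_eq {X : Type*} (t : TopologicalSpace X) (Y A : Set X) :
    subClosure t Y A = @closure X t (A ∩ Y) ∩ Y := by
  letI := t
  unfold subClosure
  ext x
  constructor
  · rintro ⟨⟨y, hy⟩, hmem, rfl⟩
    rw [closure_subtype] at hmem
    refine ⟨?_, hy⟩
    simpa [Set.inter_comm] using hmem
  · rintro ⟨hcl, hY⟩
    refine ⟨⟨x, hY⟩, ?_, rfl⟩
    rw [closure_subtype]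
    simpa [Set.inter_comm] using hcl

theorem stmt1 {X : Type*} (t1 t2 : TopologicalSpace X) (Y Z : Set X)
    (hcover : Y ∪ Z = Set.univ)
    (hsep1 : @closure X t1 (Y \ Z) ∩ (Z \ Y) = ∅)
    (hsep2 : (Y \ Z) ∩ @closure X t2 (Z \ Y) = ∅)
    (A : Set X) :
    ((@closure X t1 (A ∩ Y) ∪ @closure X t2 (A ∩ (Z \ Y))) ∩ Y) ∪
      ((@closure X t2 (A ∩ Z) ∪ @closure X t1 (A ∩ (Y \ Z))) ∩ Z) =
    subClosure t1 Y (A ∩ Y) ∪ subClosure t2 Z (A ∩ Z) := by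
  rw [subClosure_eq, subClosure_eq, Set.inter_assoc, Set.inter_self,
    Set.inter_assoc, Set.inter_self]
  apply Set.Subset.antisymm
  · rintro x (⟨(h | h), hY⟩ | ⟨(h | h), hZ⟩)
    · exact Or.inl ⟨h, hY⟩
    · -- x ∈ cl₂(A ∩ (Z\Y)) ∩ Y
      have hcl : x ∈ @closure X t2 (Z \ Y) :=
        closure_mono (Set.inter_subset_right) h
      have hZ : x ∈ Z := by
        by_contra hZ
        exact Set.eq_empty_iff_forall_notMem.mp hsep2 x ⟨⟨hY, hZ⟩, hcl⟩
      exact Or.inr ⟨closure_mono (by intro y hy; exact ⟨hy.1, hy.2.1⟩) h, hZ⟩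
    · exact Or.inr ⟨h, hZ⟩
    · have hcl : x ∈ @closure X t1 (Y \ Z) :=
        Set.mem_of_mem_of_subset h (@closure_mono X t1 _ _ Set.inter_subset_right)
      have hY : x ∈ Y := by
        by_contra hY
        exact Set.eq_empty_iff_forall_notMem.mp hsep1 x ⟨hcl, ⟨hZ, hY⟩⟩
      exact Or.inl ⟨Set.mem_of_mem_of_subset h (@closure_mono X t1 _ _ (by intro y hy; exact ⟨hy.1, hy.2.1⟩)), hY⟩
  · rintro x (⟨h, hY⟩ | ⟨h, hZ⟩)
    · exact Or.inl ⟨Or.inl h, hY⟩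
    · exact Or.inr ⟨Or.inl h, hZ⟩
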